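/- For every m ∈ ℕ and ν ∈ Λ, the element e_∞ + γ(m,ν) of Q′ belongs to the fundamental region F′ of the graph G′ if and only if ν = 0 and m > 1. -/

import Mathlib

open Finset

namespace AffineRoots

/-- The vertex set `I = {0,1,…,r}` of the graph. -/
abbrev I (r : ℕ) := Fin (r + 1)

/-- The root lattice `Q = ℤ^I`. -/
abbrev Q (r : ℕ) := I r → ℤ

variable (r : ℕ)

/-- The standard basis vector (simple root) `e_i` of `Q`. -/
def e (i : I r) : Q r := Pi.single i 1

/-- The Cartan pairing matrix `(e_i, e_j) = 2·[i=j] − a_{ij}` attached to a graph with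
`a i j` edges between `i` and `j`. -/
def cartan (a : I r → I r → ℕ) (i j : I r) : ℤ :=
  (if i = j then 2 else 0) - (a i j : ℤ)

/-- The symmetric bilinear form on `Q` determined by the Cartan pairing. -/
def B (a : I r → I r → ℕ) (α β : Q r) : ℤ :=
  ∑ i, ∑ j, α i * cartan r a i j * β j

/-- The reflection `s_i(α) = α − (α,e_i)·e_i`. -/
def refl (a : I r → I r → ℕ) (i : I r) (α : Q r) : Q r :=
  α - B r a α (e r i) • e r i

/-- The Weyl group `W`: the group of bijections of `Q` generated by the reflections. -/
def W (a : I r → I r → ℕ) : Subgroup (Equiv.Perm (Q r)) :=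
  Subgroup.closure {σ | ∃ i : I r, ∀ α, σ α = refl r a i α}

/-- The support of `α` is connected in the graph. -/
def SuppConnected (a : I r → I r → ℕ) (α : Q r) : Prop :=
  ∀ i j : I r, α i ≠ 0 → α j ≠ 0 →
    Relation.ReflTransGen (fun x y => α x ≠ 0 ∧ α y ≠ 0 ∧ 0 < a x y) i j

/-- The fundamental region `F`: nonzero `α ∈ ℕ^I` with connected support and
`(α,e_i) ≤ 0` for all `i`. -/
def Fund (a : I r → I r → ℕ) : Set (Q r) :=
  {α | α ≠ 0 ∧ (∀ i, 0 ≤ α i) ∧ SuppConnected r a α ∧ ∀ i, B r a α (e r i) ≤ 0}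

/-- The real roots: the `W`-orbits of the basis vectors. -/
def RealRoots (a : I r → I r → ℕ) : Set (Q r) :=
  {α | ∃ σ ∈ W r a, ∃ i, α = σ (e r i)}

/-- The imaginary roots: `W·F` and its negative. -/
def ImRoots (a : I r → I r → ℕ) : Set (Q r) :=
  {α | ∃ σ ∈ W r a, ∃ β ∈ Fund r a, α = σ β ∨ α = -(σ β)}

/-- The root system `R`, consisting of all real and imaginary roots. -/
def Roots (a : I r → I r → ℕ) : Set (Q r) := RealRoots r a ∪ ImRoots r a

/-- The positive roots `R⁺ = R ∩ ℕ^I`. -/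
def PosRoots (a : I r → I r → ℕ) : Set (Q r) :=
  {α ∈ Roots r a | ∀ i, 0 ≤ α i}

/-- `R_c = {α ∈ R : c(α) = 0}`. -/
def Rc (a : I r → I r → ℕ) (c : Q r →ₗ[ℤ] ℂ) : Set (Q r) :=
  {α ∈ Roots r a | c α = 0}

/-- `R_c⁺ = R_c ∩ R⁺`. -/
def RcPos (a : I r → I r → ℕ) (c : Q r →ₗ[ℤ] ℂ) : Set (Q r) :=
  Rc r a c ∩ PosRoots r a

/-- `Δ(c)`: the minimal elements of `R_c⁺`, i.e. those which cannot be written as a sum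
of two elements of `R_c⁺`. -/
def Dc (a : I r → I r → ℕ) (c : Q r →ₗ[ℤ] ℂ) : Set (Q r) :=
  {α ∈ RcPos r a c | ¬ ∃ β ∈ RcPos r a c, ∃ γ ∈ RcPos r a c, α = β + γ}

/-- The hypotheses characterizing a simply laced affine Dynkin graph, together with the
distinguished imaginary root `δ`: the graph (with `a i j` edges between `i` and `j`) is
symmetric, loopless and connected; the Cartan form is positive semidefinite; and the
radical of the form is `ℤδ`, where `δ` has positive coordinates and `δ_0 = 1`. -/
structure AffineData (a : I r → I r → ℕ) (δ : Q r) : Prop where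
  symm : ∀ i j, a i j = a j i
  noloops : ∀ i, a i i = 0
  connected : ∀ i j : I r, Relation.ReflTransGen (fun x y => 0 < a x y) i j
  posSemidef : ∀ α : Q r, 0 ≤ B r a α α
  delta_pos : ∀ i, 0 < δ i
  delta_zero : δ 0 = 1
  radical : ∀ α : Q r, (∀ β, B r a α β = 0) ↔ ∃ n : ℤ, α = n • δ

end AffineRoots

namespace AffineRoots

variable (r : ℕ)

/-- The vertex set `I ∪ {∞}` of the extended graph `G′`; `none` is the vertex `∞`. -/
abbrev I' (r : ℕ) := Option (I r)

/-- The lattice `Q′ = ℤ^{I ∪ {∞}}`. -/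
abbrev Q' (r : ℕ) := I' r → ℤ

/-- The edge-count function of the extended graph `G′`, obtained from `G` by adjoining
a new vertex `∞` joined to the vertex `0` by a single edge. -/
def a' (a : I r → I r → ℕ) : I' r → I' r → ℕ
  | some i, some j => a i j
  | some i, none => if i = 0 then 1 else 0
  | none, some j => if j = 0 then 1 else 0
  | none, none => 0

/-- The standard basis vector `e_x` of `Q′`. -/
def e' (x : I' r) : Q' r := Pi.single x 1

/-- The Cartan pairing matrix of `G′`. -/
def cartan' (a : I r → I r → ℕ) (x y : I' r) : ℤ :=
  (if x = y then 2 else 0) - (a' r a x y : ℤ)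

/-- The symmetric bilinear form on `Q′` determined by the Cartan pairing of `G′`. -/
def B' (a : I r → I r → ℕ) (α β : Q' r) : ℤ :=
  ∑ x, ∑ y, α x * cartan' r a x y * β y

/-- The support of `α ∈ Q′` is connected in `G′`. -/
def SuppConnected' (a : I r → I r → ℕ) (α : Q' r) : Prop :=
  ∀ x y : I' r, α x ≠ 0 → α y ≠ 0 →
    Relation.ReflTransGen (fun u v => α u ≠ 0 ∧ α v ≠ 0 ∧ 0 < a' r a u v) x y

/-- The fundamental region `F′` of `G′`: nonzero `α ∈ ℕ^{I ∪ {∞}}` with connected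
support and `(α,e_x) ≤ 0` for every vertex `x` of `G′`. -/
def Fund' (a : I r → I r → ℕ) : Set (Q' r) :=
  {α | α ≠ 0 ∧ (∀ x, 0 ≤ α x) ∧ SuppConnected' r a α ∧ ∀ x, B' r a α (e' r x) ≤ 0}

/-- `γ(m,ν) = mδ + (1/2)(ν,ν)δ − ν ∈ Q`. -/
def gam (a : I r → I r → ℕ) (δ : Q r) (m : ℕ) (ν : Q r) : Q r :=
  (m : ℤ) • δ + (B r a ν ν / 2) • δ - ν

/-- The element `e_∞ + γ(m,ν)` of `Q′` (extending `γ(m,ν)` by `1` at the vertex `∞`). -/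
def eInfAdd (α : Q r) : Q' r := fun x => Option.rec 1 α x

end AffineRoots


namespace AffineRoots

variable {r : ℕ} {a : I r → I r → ℕ} {δ : Q r}

section Lemmas
variable (a)

lemma B_single_right (x : Q r) (i : I r) :
    B r a x (e r i) = ∑ k, x k * cartan r a k i := by
  unfold B e
  refine Finset.sum_congr rfl fun k _ => ?_
  rw [Finset.sum_eq_single i]
  · simp
  · intro j _ hj; rw [Pi.single_eq_of_ne hj]; ring
  · simp

lemma B_expand_right (x y : Q r) : B r a x y = ∑ j, y j * B r a x (e r j) := by
  simp only [B_single_right]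
  unfold B
  rw [Finset.sum_comm]
  refine Finset.sum_congr rfl fun j _ => ?_
  rw [Finset.mul_sum]
  refine Finset.sum_congr rfl fun k _ => ?_
  ring

lemma B_add_left (x y z : Q r) : B r a (x + y) z = B r a x z + B r a y z := by
  unfold B
  rw [← Finset.sum_add_distrib]
  refine Finset.sum_congr rfl fun i _ => ?_
  rw [← Finset.sum_add_distrib]
  refine Finset.sum_congr rfl fun j _ => ?_
  simp [Pi.add_apply]; ring

lemma B_sub_left (x y z : Q r) : B r a (x - y) z = B r a x z - B r a y z := by
  unfold B
  rw [← Finset.sum_sub_distrib]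
  refine Finset.sum_congr rfl fun i _ => ?_
  rw [← Finset.sum_sub_distrib]
  refine Finset.sum_congr rfl fun j _ => ?_
  simp [Pi.sub_apply]; ring

lemma B_smul_left (t : ℤ) (x z : Q r) : B r a (t • x) z = t * B r a x z := by
  unfold B
  rw [Finset.mul_sum]
  refine Finset.sum_congr rfl fun i _ => ?_
  rw [Finset.mul_sum]
  refine Finset.sum_congr rfl fun j _ => ?_
  simp [Pi.smul_apply, smul_eq_mul]; ring

lemma B_zero_left (z : Q r) : B r a 0 z = 0 := by
  unfold B; simp

lemma B_symm (hs : ∀ i j, a i j = a j i) (x y : Q r) : B r a x y = B r a y x := by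
  unfold B
  rw [Finset.sum_comm]
  refine Finset.sum_congr rfl fun j _ => Finset.sum_congr rfl fun i _ => ?_
  have : cartan r a i j = cartan r a j i := by
    unfold cartan; rw [hs i j]; congr 1; simp [eq_comm]
  rw [this]; ring

lemma B_add_right (hs : ∀ i j, a i j = a j i) (x y z : Q r) :
    B r a z (x + y) = B r a z x + B r a z y := by
  rw [B_symm a hs, B_add_left, B_symm a hs x z, B_symm a hs y z]

lemma B_sub_right (hs : ∀ i j, a i j = a j i) (x y z : Q r) :
    B r a z (x - y) = B r a z x - B r a z y := by
  rw [B_symm a hs, B_sub_left, B_symm a hs x z, B_symm a hs y z]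

lemma B_smul_right (hs : ∀ i j, a i j = a j i) (t : ℤ) (x z : Q r) :
    B r a z (t • x) = t * B r a z x := by
  rw [B_symm a hs, B_smul_left, B_symm a hs x z]

lemma B_e_e (hnl : ∀ i, a i i = 0) (i : I r) : B r a (e r i) (e r i) = 2 := by
  rw [B_single_right]
  rw [Finset.sum_eq_single i]
  · simp [e, cartan, hnl]
  · intro j _ hj; rw [e, Pi.single_eq_of_ne hj]; ring
  · simp

lemma even_sum_symm (f : I r → I r → ℤ) (hs : ∀ i j, f i j = f j i)
    (hd : ∀ i, f i i = 0) : Even (∑ i, ∑ j, f i j) := by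
  have main : ∀ s : Finset (I r), Even (∑ i ∈ s, ∑ j ∈ s, f i j) := by
    intro s
    induction s using Finset.induction_on with
    | empty => simp
    | insert b s' ha ih =>
      rw [Finset.sum_insert ha, Finset.sum_insert ha, hd]
      have hrow : ∀ i ∈ s', (∑ j ∈ insert b s', f i j) = f i b + ∑ j ∈ s', f i j :=
        fun i _ => Finset.sum_insert ha
      rw [Finset.sum_congr rfl hrow, Finset.sum_add_distrib]
      have hcol : (∑ i ∈ s', f i b) = ∑ j ∈ s', f b j :=
        Finset.sum_congr rfl fun i _ => hs i b
      rw [hcol]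
      obtain ⟨k, hk⟩ := ih
      exact ⟨(∑ j ∈ s', f b j) + k, by linarith⟩
  exact main Finset.univ

end Lemmas

section Data
variable (h : AffineData r a δ)
include h

lemma B_delta_left (x : Q r) : B r a δ x = 0 :=
  ((h.radical δ).mpr ⟨1, (one_smul _ _).symm⟩) x

lemma B_delta_right (x : Q r) : B r a x δ = 0 := by
  rw [B_symm a h.symm]; exact B_delta_left h x

lemma norm_zero_imp (x : Q r) (hx : B r a x x = 0) : ∃ n : ℤ, x = n • δ := by
  refine (h.radical x).mp fun β => ?_
  by_contra hc
  have hcsq : 1 ≤ (B r a x β) ^ 2 := by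
    have := Int.one_le_abs (by omega : B r a x β ≠ 0)
    nlinarith [sq_abs (B r a x β)]
  have hd : 0 ≤ B r a β β := h.posSemidef β
  have hexp : B r a ((-(B r a x β) * (B r a β β + 1)) • x + β)
      ((-(B r a x β) * (B r a β β + 1)) • x + β)
      = 2 * (-(B r a x β) * (B r a β β + 1)) * B r a x β + B r a β β := by
    simp only [B_add_left, B_add_right a h.symm, B_smul_left, B_smul_right a h.symm]
    rw [hx, B_symm a h.symm β x]
    ring
  have hps := h.posSemidef ((-(B r a x β) * (B r a β β + 1)) • x + β)
  rw [hexp] at hps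
  nlinarith [mul_le_mul_of_nonneg_right hcsq (by linarith : (0:ℤ) ≤ B r a β β + 1)]

lemma even_B_diag (hs : ∀ i j, a i j = a j i) (hnl : ∀ i, a i i = 0) (x : Q r) :
    Even (B r a x x) := by
  have hsplit : B r a x x =
      (∑ i, 2 * (x i * x i)) - ∑ i, ∑ j, x i * (a i j : ℤ) * x j := by
    unfold B cartan
    rw [← Finset.sum_sub_distrib]
    refine Finset.sum_congr rfl fun i _ => ?_
    have hterm : ∀ j : I r, x i * ((if i = j then 2 else 0) - (a i j : ℤ)) * x j
        = (if i = j then 2 * (x i * x j) else 0) - x i * (a i j : ℤ) * x j := fun j => by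
      by_cases hij : i = j <;> simp [hij] <;> ring
    simp only [hterm]
    rw [Finset.sum_sub_distrib, Finset.sum_ite_eq univ i (fun j => 2 * (x i * x j))]
    simp
  rw [hsplit]
  have h1 : Even (∑ i, 2 * (x i * x i)) :=
    ⟨∑ i, x i * x i, by rw [← Finset.sum_add_distrib]; exact Finset.sum_congr rfl fun i _ => by ring⟩
  have h2 : Even (∑ i, ∑ j, x i * (a i j : ℤ) * x j) := by
    exact even_sum_symm (fun i j => x i * (a i j : ℤ) * x j)
      (fun i j => show x i * (a i j : ℤ) * x j = x j * (a j i : ℤ) * x i by rw [hs i j]; ring)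
      (fun i => show x i * (a i i : ℤ) * x i = 0 by rw [hnl i]; simp)
  exact h1.sub h2


lemma B_cross_nonpos' (p q : Q r) (hp : ∀ i, 0 ≤ p i) (hq : ∀ i, 0 ≤ q i)
    (hdisj : ∀ i, p i = 0 ∨ q i = 0) : B r a p q ≤ 0 := by
  unfold B
  refine Finset.sum_nonpos fun i _ => Finset.sum_nonpos fun j _ => ?_
  by_cases hij : i = j
  · subst hij
    rcases hdisj i with h0 | h0 <;> simp [h0]
  · have hc : cartan r a i j ≤ 0 := by
      unfold cartan; simp [hij]
    exact mul_nonpos_of_nonpos_of_nonneg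
      (mul_nonpos_of_nonneg_of_nonpos (hp i) hc) (hq j)

lemma delta_coeff_nonneg (x : Q r) (n : ℤ) (hx : x = n • δ) (hi : ∃ i, 0 ≤ x i) : 0 ≤ n := by
  obtain ⟨i, hi⟩ := hi
  rw [hx] at hi
  simp only [Pi.smul_apply, smul_eq_mul] at hi
  nlinarith [h.delta_pos i]

lemma norm_two_sign (w : Q r) (hw : B r a w w = 2) :
    (∀ i, 0 ≤ w i) ∨ (∀ i, w i ≤ 0) := by
  classical
  set p : Q r := fun i => max (w i) 0 with hpdef
  set q : Q r := fun i => max (-w i) 0 with hqdef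
  have hp : ∀ i, 0 ≤ p i := fun i => le_max_right _ _
  have hq : ∀ i, 0 ≤ q i := fun i => le_max_right _ _
  have hdisj : ∀ i, p i = 0 ∨ q i = 0 := fun i => by
    rcases le_total (w i) 0 with h0 | h0
    · left; simp [hpdef, h0]
    · right; simp [hqdef, h0]
  have hwpq : w = p - q := by
    funext i; simp only [Pi.sub_apply, hpdef, hqdef]; omega
  have hpq : B r a p q ≤ 0 := B_cross_nonpos' h p q hp hq hdisj
  have hqp : B r a q p ≤ 0 := by rw [B_symm a h.symm]; exact hpq
  have hsplit : B r a w w = B r a p p + B r a q q - B r a p q - B r a q p := by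
    rw [hwpq, B_sub_left, B_sub_right a h.symm, B_sub_right a h.symm]; ring
  have hpp : 0 ≤ B r a p p := h.posSemidef p
  have hqq : 0 ≤ B r a q q := h.posSemidef q
  -- if some part has zero norm, it's a multiple of δ
  rcases eq_or_lt_of_le hpp with hpp0 | hpp0
  · obtain ⟨n, hn⟩ := norm_zero_imp h p hpp0.symm
    have hn0 : 0 ≤ n := delta_coeff_nonneg h p n hn ⟨0, hp 0⟩
    rcases eq_or_lt_of_le hn0 with hn1 | hn1
    · right; intro i
      have hzero : p i = 0 := by rw [hn, ← hn1]; simp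
      have hle : w i ≤ p i := le_max_left _ _
      omega
    · left; intro i
      have hpipos : 0 < p i := by
        rw [hn]; simp only [Pi.smul_apply, smul_eq_mul]
        exact mul_pos hn1 (h.delta_pos i)
      rcases hdisj i with h0 | h0
      · omega
      · have hle : -w i ≤ q i := le_max_left _ _
        omega
  rcases eq_or_lt_of_le hqq with hqq0 | hqq0
  · obtain ⟨n, hn⟩ := norm_zero_imp h q hqq0.symm
    have hn0 : 0 ≤ n := delta_coeff_nonneg h q n hn ⟨0, hq 0⟩
    rcases eq_or_lt_of_le hn0 with hn1 | hn1
    · left; intro i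
      have hzero : q i = 0 := by rw [hn, ← hn1]; simp
      have hle : -w i ≤ q i := le_max_left _ _
      omega
    · right; intro i
      have hqipos : 0 < q i := by
        rw [hn]; simp only [Pi.smul_apply, smul_eq_mul]
        exact mul_pos hn1 (h.delta_pos i)
      rcases hdisj i with h0 | h0
      · have hle : w i ≤ p i := le_max_left _ _
        omega
      · omega
  · exfalso
    have hppe : 2 ≤ B r a p p := by
      obtain ⟨k, hk⟩ := even_B_diag h h.symm h.noloops p
      omega
    have hqqe : 2 ≤ B r a q q := by
      obtain ⟨k, hk⟩ := even_B_diag h h.symm h.noloops q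
      omega
    omega


lemma dominant_nonneg (x : Q r) (hx0 : x 0 = 0)
    (hdom : ∀ i, i ≠ 0 → 0 ≤ B r a x (e r i)) : ∀ i, 0 ≤ x i := by
  classical
  set p : Q r := fun i => max (x i) 0 with hpdef
  set q : Q r := fun i => max (-x i) 0 with hqdef
  have hp : ∀ i, 0 ≤ p i := fun i => le_max_right _ _
  have hq : ∀ i, 0 ≤ q i := fun i => le_max_right _ _
  have hdisj : ∀ i, q i = 0 ∨ p i = 0 := fun i => by
    rcases le_total (x i) 0 with h0 | h0
    · right; simp [hpdef, h0]
    · left; simp [hqdef, h0]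
  have hxpq : x = p - q := by
    funext i; simp only [Pi.sub_apply, hpdef, hqdef]; omega
  have hq0 : q 0 = 0 := by simp [hqdef, hx0]
  have hqx : 0 ≤ B r a x q := by
    rw [B_expand_right]
    refine Finset.sum_nonneg fun i _ => ?_
    by_cases hi : i = 0
    · subst hi; rw [hq0]; simp
    · exact mul_nonneg (hq i) (hdom i hi)
  have hqp : B r a q p ≤ 0 := B_cross_nonpos' h q p hq hp hdisj
  have key : B r a q q = B r a q p - B r a q x := by
    rw [hxpq, B_sub_right a h.symm]; ring
  have hqx' : B r a q x = B r a x q := B_symm a h.symm q x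
  have hqq0 : B r a q q ≤ 0 := by rw [key, hqx']; omega
  have hqqz : B r a q q = 0 := le_antisymm hqq0 (h.posSemidef q)
  obtain ⟨n, hn⟩ := norm_zero_imp h q hqqz
  have hn0 : n = 0 := by
    have := congrFun hn 0
    rw [hq0] at this
    simp only [Pi.smul_apply, smul_eq_mul, h.delta_zero, mul_one] at this
    omega
  intro i
  have : q i = 0 := by rw [hn, hn0]; simp
  have hle : -x i ≤ q i := le_max_left _ _
  omega

lemma no_minuscule : ∀ (n : ℕ) (x : Q r), (∑ i, x i).toNat = n → (∀ i, 0 ≤ x i) →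
    x 0 = 0 → (∀ w : Q r, w 0 = 0 → B r a w w = 2 → B r a x w ≤ 1) →
    0 < B r a x x → False := by
  intro n
  induction n using Nat.strong_induction_on with
  | _ n ih =>
  intro x hsum hpos hx0 hmin hBpos
  have hexp : B r a x x = ∑ j, x j * B r a x (e r j) := B_expand_right a x x
  have hex : ∃ i, 0 < x i * B r a x (e r i) := by
    by_contra hc
    push_neg at hc
    have : B r a x x ≤ 0 := hexp ▸ Finset.sum_nonpos fun i _ => hc i
    omega
  obtain ⟨i, hi⟩ := hex
  have hxi : 0 < x i := by
    rcases (hpos i).lt_or_eq with h0 | h0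
    · exact h0
    · exfalso; rw [← h0] at hi; simp at hi
  have hBi : 0 < B r a x (e r i) := by nlinarith
  have hi0 : i ≠ 0 := fun hc => by rw [hc, hx0] at hxi; omega
  have hei0 : e r i 0 = 0 := by
    unfold e; exact Pi.single_eq_of_ne (Ne.symm hi0) 1
  have hee : B r a (e r i) (e r i) = 2 := B_e_e a h.noloops i
  have hB1 : B r a x (e r i) = 1 := le_antisymm (hmin (e r i) hei0 hee) hBi
  set x' := x - e r i with hx'def
  have hx'pos : ∀ j, 0 ≤ x' j := by
    intro j
    by_cases hj : j = i
    · subst hj; simp only [hx'def, Pi.sub_apply, e, Pi.single_eq_same]; omega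
    · simp only [hx'def, Pi.sub_apply, e, Pi.single_eq_of_ne hj]
      have := hpos j; omega
  have hx'0 : x' 0 = 0 := by
    simp only [hx'def, Pi.sub_apply, hx0, hei0]; ring
  have hsum_e : ∑ j, e r i j = 1 := by
    unfold e
    rw [Finset.sum_eq_single i]
    · simp
    · intro j _ hj; exact Pi.single_eq_of_ne hj 1
    · simp
  have hsum' : (∑ j, x' j) = (∑ j, x j) - 1 := by
    simp only [hx'def, Pi.sub_apply]
    rw [Finset.sum_sub_distrib, hsum_e]
  have hxi_le : (1:ℤ) ≤ ∑ j, x j := by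
    calc (1:ℤ) ≤ x i := hxi
    _ ≤ ∑ j, x j := Finset.single_le_sum (fun j _ => hpos j) (Finset.mem_univ i)
  have hlt : ((∑ j, x' j).toNat) < n := by
    rw [hsum', ← hsum]
    omega
  have hmin' : ∀ w : Q r, w 0 = 0 → B r a w w = 2 → B r a x' w ≤ 1 := by
    intro w hw0 hw2
    set w' := w - (B r a w (e r i)) • e r i with hw'def
    have hw'0 : w' 0 = 0 := by
      simp only [hw'def, Pi.sub_apply, Pi.smul_apply, smul_eq_mul, hw0, hei0]; ring
    have hw'2 : B r a w' w' = 2 := by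
      simp only [hw'def]
      rw [B_sub_left, B_sub_right a h.symm, B_sub_right a h.symm, B_smul_left,
        B_smul_right a h.symm, B_smul_left, B_smul_right a h.symm, hee,
        B_symm a h.symm (e r i) w]
      rw [hw2]; ring
    have heq : B r a x' w = B r a x w' := by
      simp only [hx'def, hw'def]
      rw [B_sub_left, B_sub_right a h.symm, B_smul_right a h.symm, hB1,
        B_symm a h.symm (e r i) w]
      ring
    rw [heq]
    exact hmin w' hw'0 hw'2
  have hB' : B r a x' x' = B r a x x := by
    simp only [hx'def]
    rw [B_sub_left, B_sub_right a h.symm, B_sub_right a h.symm, hB1, hee,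
      B_symm a h.symm (e r i) x, hB1]
    ring
  exact ih _ hlt x' rfl hx'pos hx'0 hmin' (hB' ▸ hBpos)

end Data

section Prime
variable (a)

lemma B'_single_right (x : Q' r) (u : I' r) :
    B' r a x (e' r u) = ∑ k, x k * cartan' r a k u := by
  unfold B' e'
  refine Finset.sum_congr rfl fun k _ => ?_
  rw [Finset.sum_eq_single u]
  · simp
  · intro v _ hv; rw [Pi.single_eq_of_ne hv]; ring
  · simp

lemma B'_eInfAdd_none (γ : Q r) : B' r a (eInfAdd r γ) (e' r none) = 2 - γ 0 := by
  rw [B'_single_right, Fintype.sum_option]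
  have h1 : (eInfAdd r γ none * cartan' r a none none) = 2 := by
    simp [eInfAdd, cartan', a']
  have h2 : ∀ i : I r, eInfAdd r γ (some i) * cartan' r a (some i) none
      = (if i = 0 then -γ i else 0) := by
    intro i
    by_cases hi : i = 0 <;> simp [eInfAdd, cartan', a', hi]
  rw [h1, Finset.sum_congr rfl (fun i _ => h2 i), Finset.sum_ite_eq' univ (0 : I r)]
  simp
  ring

lemma B'_eInfAdd_some (γ : Q r) (i : I r) :
    B' r a (eInfAdd r γ) (e' r (some i))
      = (if i = 0 then -1 else 0) + B r a γ (e r i) := by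
  rw [B'_single_right, Fintype.sum_option]
  have h1 : (eInfAdd r γ none * cartan' r a none (some i)) = (if i = 0 then -1 else 0) := by
    by_cases hi : i = 0 <;> simp [eInfAdd, cartan', a', hi]
  have h2 : ∀ k : I r, eInfAdd r γ (some k) * cartan' r a (some k) (some i)
      = γ k * cartan r a k i := by
    intro k
    have : cartan' r a (some k) (some i) = cartan r a k i := by
      unfold cartan' cartan a'
      simp
    rw [this]; rfl
  rw [h1, Finset.sum_congr rfl (fun k _ => h2 k), ← B_single_right]

end Prime

section Gam
variable (h : AffineData r a δ)
include h

lemma gam_B_e (m : ℕ) (ν : Q r) (i : I r) :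
    B r a (gam r a δ m ν) (e r i) = - B r a ν (e r i) := by
  unfold gam
  rw [B_sub_left, B_add_left, B_smul_left, B_smul_left, B_delta_left h]
  ring

lemma gam_apply (m : ℕ) (ν : Q r) (i : I r) :
    gam r a δ m ν i = (m : ℤ) * δ i + (B r a ν ν / 2) * δ i - ν i := by
  simp [gam, Pi.add_apply, Pi.sub_apply, Pi.smul_apply, smul_eq_mul]

end Gam

end AffineRoots

open AffineRoots in
/-- For every `m ∈ ℕ` and `ν ∈ Λ = {ν ∈ Q : ν_0 = 0}`, the element `e_∞ + γ(m,ν)` of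
`Q′` belongs to the fundamental region `F′` of the graph `G′` if and only if `ν = 0` and
`m > 1`. -/
theorem eInfAdd_gam_mem_fund_iff (r : ℕ) (a : I r → I r → ℕ) (δ : Q r)
    (hdata : AffineData r a δ) (m : ℕ) (ν : Q r) (hν : ν 0 = 0) :
    eInfAdd r (gam r a δ m ν) ∈ Fund' r a ↔ ν = 0 ∧ 1 < m := by
  constructor
  · rintro ⟨hne, hpos, hconn, hB⟩
    have hBnone := hB none
    rw [B'_eInfAdd_none] at hBnone
    have ht : ∀ i : I r, (if i = 0 then (-1:ℤ) else 0) ≤ B r a ν (e r i) := by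
      intro i
      have := hB (some i)
      rw [B'_eInfAdd_some, gam_B_e hdata] at this
      split at this <;> split <;> omega
    have hsum0 : ∑ i, δ i * B r a ν (e r i) = 0 := by
      have hd : B r a ν δ = 0 := B_delta_right hdata ν
      rw [B_expand_right] at hd
      exact hd
    have hsplit : δ 0 * B r a ν (e r 0) + ∑ i ∈ Finset.univ.erase (0 : I r),
        δ i * B r a ν (e r i) = ∑ i, δ i * B r a ν (e r i) :=
      Finset.add_sum_erase Finset.univ
        (fun i => δ i * B r a ν (e r i)) (Finset.mem_univ (0 : I r))
    have hterm_nonneg : ∀ i ∈ Finset.univ.erase (0 : I r),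
        0 ≤ δ i * B r a ν (e r i) := by
      intro i hi
      have hi0 : i ≠ 0 := Finset.ne_of_mem_erase hi
      have h1 := ht i
      rw [if_neg hi0] at h1
      exact mul_nonneg (le_of_lt (hdata.delta_pos i)) h1
    by_cases ht0 : B r a ν (e r 0) = 0
    -- case A : all pairings vanish, ν = 0
    · have hallzero : ∀ i, B r a ν (e r i) = 0 := by
        have hsumz : ∑ i ∈ Finset.univ.erase (0 : I r), δ i * B r a ν (e r i) = 0 := by
          rw [hsum0, ht0, mul_zero] at hsplit
          omega
        intro i
        by_cases hi0 : i = 0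
        · rw [hi0]; exact ht0
        · have := (Finset.sum_eq_zero_iff_of_nonneg hterm_nonneg).mp hsumz i
            (Finset.mem_erase.mpr ⟨hi0, Finset.mem_univ i⟩)
          have hδ := hdata.delta_pos i
          have : δ i * B r a ν (e r i) = 0 := this
          rcases mul_eq_zero.mp this with hc | hc
          · omega
          · exact hc
      have hrad : ∀ β, B r a ν β = 0 := by
        intro β
        rw [B_expand_right]
        exact Finset.sum_eq_zero fun j _ => by rw [hallzero j]; ring
      obtain ⟨n, hn⟩ := (hdata.radical ν).mp hrad
      have hn0 : n = 0 := by
        have := congrFun hn 0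
        rw [hν] at this
        simp only [Pi.smul_apply, smul_eq_mul, hdata.delta_zero, mul_one] at this
        omega
      have hν0 : ν = 0 := by rw [hn, hn0]; simp
      refine ⟨hν0, ?_⟩
      rw [gam_apply hdata, hν0, B_zero_left, hdata.delta_zero] at hBnone
      simp at hBnone
      omega
    -- case B : impossible
    · exfalso
      have ht0' : B r a ν (e r 0) = -1 := by
        have h1 := ht 0
        rw [if_pos rfl] at h1
        -- show it cannot be ≥ 0
        rcases eq_or_lt_of_le h1 with hc | hc
        · omega
        have h2 : -1 < B r a ν (e r 0) := hc
        -- t 0 ≥ 0, so all terms nonneg summing to 0 fails only if t0=0, contradiction with ht0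
        have ht00 : 0 ≤ B r a ν (e r 0) := by omega
        have : ∀ i ∈ Finset.univ, 0 ≤ δ i * B r a ν (e r i) := by
          intro i _
          by_cases hi0 : i = 0
          · subst hi0; exact mul_nonneg (le_of_lt (hdata.delta_pos 0)) ht00
          · have h1 := ht i; rw [if_neg hi0] at h1
            exact mul_nonneg (le_of_lt (hdata.delta_pos i)) h1
        have := (Finset.sum_eq_zero_iff_of_nonneg this).mp hsum0 0 (Finset.mem_univ 0)
        rw [hdata.delta_zero] at this
        omega
      -- find the special vertex j
      have hsumerase : ∑ i ∈ Finset.univ.erase (0 : I r), δ i * B r a ν (e r i) = 1 := by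
        rw [hsum0, ht0', hdata.delta_zero] at hsplit
        omega
      have hexj : ∃ j ∈ Finset.univ.erase (0 : I r), 0 < δ j * B r a ν (e r j) := by
        by_contra hc
        push_neg at hc
        have : ∑ i ∈ Finset.univ.erase (0 : I r), δ i * B r a ν (e r i) = 0 :=
          le_antisymm (Finset.sum_nonpos hc) (Finset.sum_nonneg hterm_nonneg)
        omega
      obtain ⟨j, hjmem, hjpos⟩ := hexj
      have hj0 : j ≠ 0 := Finset.ne_of_mem_erase hjmem
      have hsplit2 : δ j * B r a ν (e r j) + ∑ i ∈ (Finset.univ.erase (0 : I r)).erase j,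
          δ i * B r a ν (e r i) = ∑ i ∈ Finset.univ.erase (0 : I r), δ i * B r a ν (e r i) :=
        Finset.add_sum_erase (Finset.univ.erase (0 : I r))
          (fun i => δ i * B r a ν (e r i)) hjmem
      have hrest_nonneg : 0 ≤ ∑ i ∈ (Finset.univ.erase (0 : I r)).erase j,
          δ i * B r a ν (e r i) :=
        Finset.sum_nonneg fun i hi =>
          hterm_nonneg i (Finset.mem_of_mem_erase hi)
      have hj1 : δ j * B r a ν (e r j) = 1 := by
        rw [hsumerase] at hsplit2
        omega
      have hδj : δ j = 1 ∧ B r a ν (e r j) = 1 := by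
        have hδpos := hdata.delta_pos j
        have htj : 0 < B r a ν (e r j) := by
          by_contra hc
          push_neg at hc
          nlinarith
        constructor <;> nlinarith
      have hrest0 : ∀ i, i ≠ 0 → i ≠ j → B r a ν (e r i) = 0 := by
        have hz : ∑ i ∈ (Finset.univ.erase (0 : I r)).erase j,
            δ i * B r a ν (e r i) = 0 := by
          rw [hsumerase] at hsplit2
          omega
        intro i hi0 hij
        have hmem : i ∈ (Finset.univ.erase (0 : I r)).erase j :=
          Finset.mem_erase.mpr ⟨hij, Finset.mem_erase.mpr ⟨hi0, Finset.mem_univ i⟩⟩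
        have := (Finset.sum_eq_zero_iff_of_nonneg
          (fun i hi => hterm_nonneg i (Finset.mem_of_mem_erase hi))).mp hz i hmem
        have hδ := hdata.delta_pos i
        rcases mul_eq_zero.mp this with hc | hc
        · omega
        · exact hc
      -- ν is dominant hence nonnegative
      have hdom : ∀ i, i ≠ 0 → 0 ≤ B r a ν (e r i) := by
        intro i hi0
        have h1 := ht i; rw [if_neg hi0] at h1; exact h1
      have hnn : ∀ i, 0 ≤ ν i := dominant_nonneg hdata ν hν hdom
      -- the pairing of ν with any w is w j
      have hpair : ∀ w : Q r, w 0 = 0 → B r a ν w = w j := by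
        intro w hw0
        rw [B_expand_right]
        rw [Finset.sum_eq_single j]
        · rw [hδj.2]; ring
        · intro k _ hkj
          by_cases hk0 : k = 0
          · subst hk0; rw [hw0]; ring
          · rw [hrest0 k hk0 hkj]; ring
        · simp
      -- minuscule property
      have hmin : ∀ w : Q r, w 0 = 0 → B r a w w = 2 → B r a ν w ≤ 1 := by
        intro w hw0 hw2
        rw [hpair w hw0]
        rcases norm_two_sign hdata w hw2 with hw | hw
        · -- w ≥ 0 : use δ - w ≥ 0
          have hu2 : B r a (δ - w) (δ - w) = 2 := by
            rw [B_sub_left, B_sub_right a hdata.symm, B_sub_right a hdata.symm,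
              B_delta_left hdata, B_delta_left hdata, B_delta_right hdata, hw2]
            ring
          rcases norm_two_sign hdata (δ - w) hu2 with hu | hu
          · have := hu j
            simp only [Pi.sub_apply] at this
            have := hδj.1
            omega
          · exfalso
            have := hu 0
            simp only [Pi.sub_apply, hdata.delta_zero, hw0] at this
            omega
        · exact le_trans (hw j) (by omega)
      -- B ν ν > 0
      have hνν : 0 < B r a ν ν := by
        rcases (hdata.posSemidef ν).lt_or_eq with h1 | h1
        · exact h1
        · exfalso
          obtain ⟨n, hn⟩ := norm_zero_imp hdata ν h1.symm
          have hn0 : n = 0 := by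
            have := congrFun hn 0
            rw [hν] at this
            simp only [Pi.smul_apply, smul_eq_mul, hdata.delta_zero, mul_one] at this
            omega
          have hν0 : ν = 0 := by rw [hn, hn0]; simp
          have hcon := hδj.2
          rw [hν0, B_zero_left] at hcon
          omega
      exact no_minuscule hdata ((∑ i, ν i).toNat) ν rfl hnn hν hmin hνν
  · rintro ⟨hν0, hm⟩
    subst hν0
    have hγ : ∀ i, gam r a δ m 0 i = (m : ℤ) * δ i := by
      intro i
      rw [gam_apply hdata, B_zero_left]
      simp
    have hm2 : (2:ℤ) ≤ (m:ℤ) := by exact_mod_cast hm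
    have hnz : ∀ x, eInfAdd r (gam r a δ m 0) x ≠ 0 := by
      intro x
      cases x with
      | none => simp [eInfAdd]
      | some i =>
        show gam r a δ m 0 i ≠ 0
        rw [hγ i]
        have := hdata.delta_pos i
        nlinarith
    refine ⟨?_, ?_, ?_, ?_⟩
    · intro hc
      exact hnz none (by rw [hc]; rfl)
    · intro x
      cases x with
      | none => show (0:ℤ) ≤ 1; omega
      | some i =>
        show (0:ℤ) ≤ gam r a δ m 0 i
        rw [hγ i]
        have := hdata.delta_pos i
        positivity
    · -- connectivity
      intro x y _ _
      set R := fun u v => eInfAdd r (gam r a δ m 0) u ≠ 0 ∧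
        eInfAdd r (gam r a δ m 0) v ≠ 0 ∧ 0 < a' r a u v with hR
      have hlift : ∀ i k : I r, Relation.ReflTransGen (fun x y => 0 < a x y) i k →
          Relation.ReflTransGen R (some i) (some k) := by
        intro i k hik
        exact Relation.ReflTransGen.lift (r := fun x y => 0 < a x y) (p := R) (fun u => some u)
          (fun u v huv => ⟨hnz _, hnz _, huv⟩) i k hik
      have hstep : Relation.ReflTransGen R none (some 0) :=
        Relation.ReflTransGen.single ⟨hnz none, hnz (some 0), by simp [a']⟩
      have hRsymm : Symmetric R := by
        intro u v ⟨h1, h2, h3⟩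
        refine ⟨h2, h1, ?_⟩
        have : a' r a u v = a' r a v u := by
          cases u <;> cases v <;> simp [a', hdata.symm]
        omega
      match x, y with
      | some i, some k => exact hlift i k (hdata.connected i k)
      | none, none => exact Relation.ReflTransGen.refl
      | none, some k => exact hstep.trans (hlift 0 k (hdata.connected 0 k))
      | some i, none =>
        exact Std.Symm.symm (self := @Relation.ReflTransGen.stdSymm _ R ⟨fun _ _ h => hRsymm h⟩) _ _
          (hstep.trans (hlift 0 i (hdata.connected 0 i)))
    · intro x
      cases x with
      | none =>
        rw [B'_eInfAdd_none, hγ 0, hdata.delta_zero]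
        omega
      | some i =>
        rw [B'_eInfAdd_some, gam_B_e hdata, B_zero_left]
        split <;> omega
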